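/- Let p be an odd prime, m ≥ 2, s ≥ 1, and ζ a primitive p^s-th root of unity in Q̄_p. Then the natural injection Z_p/(p^m) ↪ Z_p[ζ]/(1−ζ)^{(m−1)p^{s−1}(p−1)+1} is not surjective; in particular, the image of ζ in the target ring does not lie in the image of Z_p/(p^m). Consequently, a character η : Z_p^× → Z_p[ζ]^× of exact order p^s cannot be congruent mod p^m to any character of Z_p^× with values in Z_p^×. -/

import Mathlib

open Polynomial in
theorem aux18 (p : ℕ) [hp : Fact p.Prime] (hodd : p ≠ 2) (m s : ℕ) (hm : 2 ≤ m) (hs : 1 ≤ s)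
    {O : Type} [CommRing O] [IsDomain O] (f : ℤ_[p] →+* O)
    (hpu : ¬ IsUnit ((p : ℕ) : O)) (ζ : O) (hζ : IsPrimitiveRoot ζ (p ^ s)) :
    (∀ x : ℤ_[p],
        f x ∈ (Ideal.span {1 - ζ}) ^ ((m - 1) * (p ^ (s - 1) * (p - 1)) + 1)
        ↔ (p : ℤ_[p]) ^ m ∣ x) ∧
    (¬ ∃ x : ℤ_[p],
        Ideal.Quotient.mk ((Ideal.span {1 - ζ}) ^ ((m - 1) * (p ^ (s - 1) * (p - 1)) + 1)) (f x) =
          Ideal.Quotient.mk ((Ideal.span {1 - ζ}) ^ ((m - 1) * (p ^ (s - 1) * (p - 1)) + 1)) ζ) ∧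
    (∀ η : ℤ_[p]ˣ →* Oˣ, orderOf η = p ^ s →
      ¬ ∃ χ : ℤ_[p]ˣ →* ℤ_[p]ˣ, ∀ u : ℤ_[p]ˣ,
        ((η u : O) - f (χ u : ℤ_[p])) ∈
          (Ideal.span {1 - ζ}) ^ ((m - 1) * (p ^ (s - 1) * (p - 1)) + 1)) := by
  have hp3 : 3 ≤ p := by
    rcases hp.out.two_le.lt_or_eq with h | h
    · omega
    · omega
  set E := p ^ (s - 1) * (p - 1) with hE
  have hE2 : 2 ≤ E := by
    have h1 : 1 ≤ p ^ (s - 1) := Nat.one_le_pow _ _ hp.out.pos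
    have h2 : 2 ≤ p - 1 := by omega
    calc 2 = 1 * 2 := by omega
    _ ≤ p ^ (s - 1) * (p - 1) := Nat.mul_le_mul h1 h2
  set γ := (m - 1) * E + 1 with hγ
  have hEγ : E + 1 ≤ γ := by
    have : 1 * E ≤ (m - 1) * E := Nat.mul_le_mul_right E (by omega)
    simp only [one_mul] at this
    omega
  have hγ2 : 2 ≤ γ := by omega
  have hps1 : 1 < p ^ s := Nat.one_lt_pow (by omega) (by omega)
  haveI : NeZero (p ^ s) := ⟨by positivity⟩
  have hπ0 : (1 : O) - ζ ≠ 0 := sub_ne_zero_of_ne (Ne.symm (hζ.ne_one hps1))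
  -- p = ∏ (1 - μ) over primitive roots
  have hcyc : ((p : ℕ) : O) = ∏ μ ∈ primitiveRoots (p ^ s) O, (1 - μ) := by
    have h1 : eval 1 (cyclotomic (p ^ s) O) = ((p : ℕ) : O) := by
      obtain ⟨s', rfl⟩ : ∃ s', s = s' + 1 := ⟨s - 1, by omega⟩
      exact eval_one_cyclotomic_prime_pow s'
    rw [cyclotomic_eq_prod_X_sub_primitiveRoots hζ] at h1
    rw [← h1, eval_prod]
    simp
  -- each factor is (1-ζ) times a unit
  have hfac : ∀ μ : O, ∃ t : O, μ ∈ primitiveRoots (p ^ s) O →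
      (IsUnit t ∧ 1 - μ = (1 - ζ) * t) := by
    intro μ
    by_cases hμ : μ ∈ primitiveRoots (p ^ s) O
    · have hμ' : IsPrimitiveRoot μ (p ^ s) := (mem_primitiveRoots (by positivity)).1 hμ
      obtain ⟨i, -, hi⟩ := hζ.eq_pow_of_pow_eq_one hμ'.pow_eq_one
      obtain ⟨j, -, hj⟩ := hμ'.eq_pow_of_pow_eq_one hζ.pow_eq_one
      obtain ⟨a, ha⟩ : (1 - ζ) ∣ (1 - μ) := by
        rw [← hi]
        simpa using sub_dvd_pow_sub_pow 1 ζ i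
      obtain ⟨b, hb⟩ : (1 - μ) ∣ (1 - ζ) := by
        rw [← hj]
        simpa using sub_dvd_pow_sub_pow 1 μ j
      refine ⟨a, fun _ => ⟨?_, ha⟩⟩
      have hab : (1 - ζ) * (a * b) = (1 - ζ) * 1 := by
        rw [mul_one, ← mul_assoc, ← ha, ← hb]
      exact IsUnit.of_mul_eq_one _ (mul_left_cancel₀ hπ0 hab)
    · exact ⟨1, fun h => absurd h hμ⟩
  choose t ht using hfac
  have hcard : (primitiveRoots (p ^ s) O).card = E := by
    rw [hζ.card_primitiveRoots, hE, Nat.totient_prime_pow hp.out (by omega)]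
  have hpw : ∃ w : O, IsUnit w ∧ ((p : ℕ) : O) = (1 - ζ) ^ E * w := by
    refine ⟨∏ μ ∈ primitiveRoots (p ^ s) O, t μ, ?_, ?_⟩
    · exact Finset.prod_induction _ _ (fun a b => IsUnit.mul) isUnit_one
        (fun μ hμ => (ht μ hμ).1)
    · rw [hcyc, Finset.prod_congr rfl (fun μ hμ => (ht μ hμ).2), Finset.prod_mul_distrib,
        Finset.prod_const, hcard]
  obtain ⟨w, hw, hpw⟩ := hpw
  have hπu : ¬ IsUnit ((1 : O) - ζ) := by
    intro h
    exact hpu (hpw ▸ ((h.pow E).mul hw))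
  have hItop : Ideal.span {(1 : O) - ζ} ≠ ⊤ := by
    rw [Ne, Ideal.span_singleton_eq_top]
    exact hπu
  -- key non-membership lemma
  have key : ∀ ζ' : O, ((1 : O) - ζ) ∣ (1 - ζ') → ((1 : O) - ζ') ∣ (1 - ζ) →
      ∀ c : ℤ_[p], ζ' - f c ∉ (Ideal.span {(1:O) - ζ}) ^ γ := by
    rintro ζ' ⟨a, ha⟩ ⟨b, hb⟩ c hmem
    rw [Ideal.span_singleton_pow, Ideal.mem_span_singleton] at hmem
    obtain ⟨z, hz⟩ := hmem
    have hab : a * b = 1 := by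
      apply mul_left_cancel₀ hπ0
      rw [mul_one, ← mul_assoc, ← ha, ← hb]
    have hua : IsUnit a := IsUnit.of_mul_eq_one _ hab
    have hfc : f (1 - c) = (1 - ζ') + (ζ' - f c) := by
      rw [map_sub, map_one]; ring
    have hnc : ¬ IsUnit (1 - c) := by
      intro h
      apply hItop
      apply Ideal.eq_top_of_isUnit_mem _ _ (h.map f)
      rw [hfc, ha, hz]
      refine Ideal.add_mem _ (Ideal.mem_span_singleton.2 ⟨a, rfl⟩) ?_
      exact Ideal.mem_span_singleton.2 (Dvd.dvd.mul_right (dvd_pow_self _ (by omega)) z)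
    have hdvd : ((p : ℕ) : ℤ_[p]) ∣ (1 - c) := by
      rw [← PadicInt.norm_lt_one_iff_dvd]
      exact lt_of_le_of_ne (PadicInt.norm_le_one _) (fun h => hnc (PadicInt.isUnit_iff.2 h))
    obtain ⟨d, hd⟩ := hdvd
    -- (1-ζ)*a = (1-ζ)^E * w * f d - (1-ζ)^γ * z
    have heq : (1 - ζ) * a = (1 - ζ) ^ E * (w * f d) - (1 - ζ) ^ γ * z := by
      have h1 : f (1 - c) = (1 - ζ) ^ E * (w * f d) := by
        rw [hd, map_mul, map_natCast, hpw]; ring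
      rw [← ha]
      have := hfc
      rw [h1, hz] at this
      linear_combination -this
    obtain ⟨E', hE'⟩ : ∃ E', E = E' + 1 := ⟨E - 1, by omega⟩
    obtain ⟨γ', hγ'⟩ : ∃ γ', γ = γ' + 1 := ⟨γ - 1, by omega⟩
    have ha2 : a = (1 - ζ) ^ E' * (w * f d) - (1 - ζ) ^ γ' * z := by
      apply mul_left_cancel₀ hπ0
      rw [heq, hE', hγ', pow_succ]
      ring
    apply hItop
    apply Ideal.eq_top_of_isUnit_mem _ _ hua
    rw [ha2]
    refine Ideal.sub_mem _ ?_ ?_ <;>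
      exact Ideal.mem_span_singleton.2
        (Dvd.dvd.mul_right (dvd_pow_self _ (by omega)) _)
  refine ⟨?_, ?_, ?_⟩
  · -- part (i)
    intro x
    rw [Ideal.span_singleton_pow, Ideal.mem_span_singleton]
    constructor
    · intro hdvd
      by_contra hnd
      have hx0 : x ≠ 0 := by rintro rfl; exact hnd (dvd_zero _)
      have hspec := PadicInt.unitCoeff_spec hx0
      set τ := x.valuation with hτ
      have hτm : τ < m := by
        by_contra h
        push_neg at h
        apply hnd
        refine dvd_trans (pow_dvd_pow _ h) ?_
        exact Dvd.intro_left _ hspec.symm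
      obtain ⟨z, hz⟩ := hdvd
      have hfx : f x = (1 - ζ) ^ (E * τ) * ((f (PadicInt.unitCoeff hx0) * w ^ τ)) := by
        conv_lhs => rw [hspec]
        rw [map_mul, map_pow, map_natCast, hpw, mul_pow, ← pow_mul]
        ring
      obtain ⟨g, hg⟩ : ∃ g, γ = E * τ + (g + 1) := by
        refine ⟨γ - E * τ - 1, ?_⟩
        have h1 : E * τ ≤ E * (m - 1) := Nat.mul_le_mul_left E (by omega)
        have h2 : E * (m - 1) = (m - 1) * E := Nat.mul_comm _ _
        omega
      have hcanc : f (PadicInt.unitCoeff hx0) * w ^ τ = (1 - ζ) ^ (g + 1) * z := by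
        apply mul_left_cancel₀ (pow_ne_zero (E * τ) hπ0)
        rw [← hfx, hz, hg, pow_add]
        ring
      apply hItop
      apply Ideal.eq_top_of_isUnit_mem _ _
        (((PadicInt.unitCoeff hx0).isUnit.map f).mul (hw.pow τ))
      rw [hcanc]
      exact Ideal.mem_span_singleton.2 (Dvd.dvd.mul_right (dvd_pow_self _ (by omega)) _)
    · rintro ⟨y, rfl⟩
      rw [map_mul, map_pow, map_natCast, hpw, mul_pow, ← pow_mul]
      have hle : γ ≤ E * m := by
        have h3 : E * (m - 1) + E = E * m := by
          obtain ⟨n, rfl⟩ : ∃ n, m = n + 1 := ⟨m - 1, by omega⟩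
          simp [Nat.mul_succ]
        have h2 : E * (m - 1) = (m - 1) * E := Nat.mul_comm _ _
        omega
      exact Dvd.dvd.mul_right (Dvd.dvd.mul_right (pow_dvd_pow _ hle) _) _
  · -- part (ii)
    rintro ⟨x, hx⟩
    rw [Ideal.Quotient.eq] at hx
    exact key ζ dvd_rfl dvd_rfl x (by simpa using (neg_mem hx))
  · -- part (iii)
    rintro η hη ⟨χ, hχ⟩
    have hps : η ^ p ^ s = 1 := by rw [← hη]; exact pow_orderOf_eq_one η
    have hne : η ^ p ^ (s - 1) ≠ 1 := by
      intro h
      have h2 : orderOf η ∣ p ^ (s - 1) := orderOf_dvd_of_pow_eq_one (by exact h)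
      rw [hη] at h2
      have := (Nat.pow_dvd_pow_iff_le_right (by omega : 1 < p)).1 h2
      omega
    obtain ⟨u₀, hu₀⟩ : ∃ u, (η ^ p ^ (s - 1)) u ≠ 1 := by
      by_contra h
      push_neg at h
      exact hne (MonoidHom.ext fun u => by simpa using h u)
    have h1 : (η u₀) ^ p ^ s = 1 := by
      rw [← MonoidHom.pow_apply, hps]; rfl
    have hdvd : orderOf (η u₀) ∣ p ^ s := orderOf_dvd_of_pow_eq_one h1
    obtain ⟨j, hj, hoj⟩ := (Nat.dvd_prime_pow hp.out).1 hdvd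
    have hjs : j = s := by
      by_contra hne'
      have hj2 : j ≤ s - 1 := by omega
      have : (η u₀) ^ p ^ (s - 1) = 1 :=
        orderOf_dvd_iff_pow_eq_one.1 (hoj ▸ pow_dvd_pow p hj2)
      rw [MonoidHom.pow_apply] at hu₀
      exact hu₀ this
    have hord : orderOf (η u₀) = p ^ s := by rw [hoj, hjs]
    have hprim : IsPrimitiveRoot ((η u₀ : Oˣ) : O) (p ^ s) := by
      rw [IsPrimitiveRoot.coe_units_iff]
      exact hord ▸ IsPrimitiveRoot.orderOf (η u₀)
    obtain ⟨i, -, hi⟩ := hζ.eq_pow_of_pow_eq_one hprim.pow_eq_one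
    obtain ⟨j', -, hj'⟩ := hprim.eq_pow_of_pow_eq_one hζ.pow_eq_one
    have d1 : ((1 : O) - ζ) ∣ (1 - ((η u₀ : Oˣ) : O)) := by
      rw [← hi]; simpa using sub_dvd_pow_sub_pow 1 ζ i
    have d2 : ((1 : O) - ((η u₀ : Oˣ) : O)) ∣ (1 - ζ) := by
      rw [← hj']; simpa using sub_dvd_pow_sub_pow 1 ((η u₀ : Oˣ) : O) j'
    exact key _ d1 d2 (χ u₀) (hχ u₀)

theorem stmt18_hpu (p : ℕ) [hp : Fact p.Prime]
    (K : Type) [Field K] [Algebra ℚ_[p] K]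
    [Algebra ℤ_[p] K] [IsScalarTower ℤ_[p] ℚ_[p] K] :
    ¬ IsUnit ((p : ℕ) : integralClosure ℤ_[p] K) := by
  intro h
  obtain ⟨u, hu⟩ := h
  have hpy : ((p : ℕ) : integralClosure ℤ_[p] K) * ↑u⁻¹ = 1 := by
    rw [← hu]; exact u.mul_inv
  have hK : ((p : ℕ) : K) * (algebraMap (integralClosure ℤ_[p] K) K ↑u⁻¹) = 1 := by
    have := congrArg (algebraMap (integralClosure ℤ_[p] K) K) hpy
    rwa [map_mul, map_natCast, map_one] at this
  have hp0 : ((p : ℕ) : ℚ_[p]) ≠ 0 := Nat.cast_ne_zero.2 hp.out.ne_zero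
  have hyval : (algebraMap (integralClosure ℤ_[p] K) K ↑u⁻¹) =
      algebraMap ℚ_[p] K (((p : ℕ) : ℚ_[p])⁻¹) := by
    rw [map_inv₀, map_natCast]
    exact eq_inv_of_mul_eq_one_right hK
  have hint : IsIntegral ℤ_[p] (((p : ℕ) : ℚ_[p])⁻¹) := by
    have h2 : IsIntegral ℤ_[p] (algebraMap (integralClosure ℤ_[p] K) K ↑u⁻¹) :=
      ((u⁻¹ : (integralClosure ℤ_[p] K)ˣ) : integralClosure ℤ_[p] K).2
    rw [hyval] at h2
    exact (isIntegral_algebraMap_iff ((algebraMap ℚ_[p] K).injective)).1 h2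
  obtain ⟨z, hz⟩ := IsIntegrallyClosed.isIntegral_iff.1 hint
  have hz1 : (p : ℤ_[p]) * z = 1 := by
    have : algebraMap ℤ_[p] ℚ_[p] ((p : ℤ_[p]) * z) = algebraMap ℤ_[p] ℚ_[p] 1 := by
      rw [map_mul, map_natCast, map_one, hz, mul_inv_cancel₀ hp0]
    exact IsFractionRing.injective ℤ_[p] ℚ_[p] this
  have hun : IsUnit ((p : ℕ) : ℤ_[p]) := IsUnit.of_mul_eq_one _ hz1
  rw [PadicInt.isUnit_iff, PadicInt.norm_p, inv_eq_one] at hun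
  have h1 : p = 1 := by exact_mod_cast hun
  have := hp.out.two_le
  omega

/-!
STATEMENT 18: Let p be an odd prime, m ≥ 2, s ≥ 1, K = ℚ_p(ζ) with ζ a primitive
p^s-th root of unity, O = ℤ_p[ζ] the ring of integers (the integral closure of ℤ_p in
K), and γ = (m−1)·p^{s−1}(p−1) + 1.  Then the natural map
ℤ_p/(p^m) → O/(1−ζ)^γ — whose injectivity/well-definedness is claim (i), that the
kernel of ℤ_p → O/(1−ζ)^γ is exactly (p^m) — is not surjective: (ii) the image of ζ in
O/(1−ζ)^γ is not in the image of ℤ_p.  Consequently (iii), a character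
η : ℤ_p^× → O^× of exact order p^s is not congruent mod p^m (i.e. modulo (1−ζ)^γ,
value by value) to any character of ℤ_p^× with values in ℤ_p^×.
-/
set_option synthInstance.maxHeartbeats 1000000 in
set_option maxHeartbeats 1000000 in
theorem stmt18 (p : ℕ) [Fact p.Prime] (hodd : p ≠ 2) (m s : ℕ) (hm : 2 ≤ m) (hs : 1 ≤ s)
    (K : Type) [Field K] [Algebra ℚ_[p] K] [FiniteDimensional ℚ_[p] K]
    [Algebra ℤ_[p] K] [IsScalarTower ℤ_[p] ℚ_[p] K]
    (ζ : integralClosure ℤ_[p] K) (hζ : IsPrimitiveRoot ζ (p ^ s))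
    (hgen : Algebra.adjoin ℚ_[p] {(ζ : K)} = ⊤) :
    (∀ x : ℤ_[p],
        algebraMap ℤ_[p] (integralClosure ℤ_[p] K) x ∈
          (Ideal.span {1 - ζ}) ^ ((m - 1) * (p ^ (s - 1) * (p - 1)) + 1)
        ↔ (p : ℤ_[p]) ^ m ∣ x) ∧
    (¬ ∃ x : ℤ_[p],
        Ideal.Quotient.mk ((Ideal.span {1 - ζ}) ^ ((m - 1) * (p ^ (s - 1) * (p - 1)) + 1))
            (algebraMap ℤ_[p] (integralClosure ℤ_[p] K) x) =
          Ideal.Quotient.mk ((Ideal.span {1 - ζ}) ^ ((m - 1) * (p ^ (s - 1) * (p - 1)) + 1))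
            ζ) ∧
    (∀ η : ℤ_[p]ˣ →* (integralClosure ℤ_[p] K)ˣ, orderOf η = p ^ s →
      ¬ ∃ χ : ℤ_[p]ˣ →* ℤ_[p]ˣ, ∀ u : ℤ_[p]ˣ,
        ((η u : integralClosure ℤ_[p] K) -
            algebraMap ℤ_[p] (integralClosure ℤ_[p] K) (χ u : ℤ_[p])) ∈
          (Ideal.span {1 - ζ}) ^ ((m - 1) * (p ^ (s - 1) * (p - 1)) + 1)) := by
  exact aux18 p hodd m s hm hs (algebraMap ℤ_[p] (integralClosure ℤ_[p] K))
    (stmt18_hpu p K) ζ hζ
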